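/- arXiv:1911.07594 — 2 statements merged into one kernel-verified Lean document; each statement's English description precedes it below -/
import Mathlib

section
/- Fix constants μ > 0, c > 0 and α ∈ (0,1), and define g : [0,∞) → ℝ by g(x) = μ·(1 − exp(−c·x^α)) − x. Then g has a unique root ρ* in (0,∞); moreover ρ* < μ, g(x) > 0 for all x ∈ (0, ρ*), and g(x) < 0 for all x > ρ* (so ρ* is a stable zero of g). -/
open Real

/-- The function `g(x) = μ(1 - exp(-c x^α)) - x` (with `μ, c > 0`, `α ∈ (0,1)`) has a
unique root `ρ*` in `(0,∞)`; moreover `ρ* < μ`, `g > 0` on `(0, ρ*)` and `g < 0` on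
`(ρ*, ∞)`, so `ρ*` is a stable zero of `g`. -/
theorem unique_stable_root
    (μ c α : ℝ) (hμ : 0 < μ) (hc : 0 < c) (hα : α ∈ Set.Ioo (0:ℝ) 1)
    (g : ℝ → ℝ) (hg : ∀ x : ℝ, g x = μ * (1 - Real.exp (-c * x ^ α)) - x) :
    ∃ ρ : ℝ, 0 < ρ ∧ g ρ = 0 ∧ ρ < μ ∧
      (∀ x : ℝ, 0 < x → x < ρ → 0 < g x) ∧
      (∀ x : ℝ, ρ < x → g x < 0) ∧
      (∀ x : ℝ, 0 < x → g x = 0 → x = ρ) := by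
  obtain ⟨hα0, hα1⟩ := hα
  set F : ℝ → ℝ := fun x => μ * (1 - Real.exp (-c * x ^ α)) / x - 1 with hF
  have hgF : ∀ x : ℝ, 0 < x → g x = x * F x := by
    intro x hx
    rw [hg, hF]
    field_simp
  -- derivative of F
  have hderiv : ∀ x : ℝ, 0 < x → HasDerivAt F
      ((μ * (Real.exp (-c * x ^ α) * (c * (α * x ^ (α - 1)))) * x
        - μ * (1 - Real.exp (-c * x ^ α)) * 1) / x ^ 2) x := by
    intro x hx
    have h1 : HasDerivAt (fun x : ℝ => x ^ α) (α * x ^ (α - 1)) x :=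
      Real.hasDerivAt_rpow_const (Or.inl hx.ne')
    have h2 : HasDerivAt (fun x : ℝ => -c * x ^ α) (-c * (α * x ^ (α - 1))) x :=
      h1.const_mul _
    have h3 : HasDerivAt (fun x : ℝ => Real.exp (-c * x ^ α))
        (Real.exp (-c * x ^ α) * (-c * (α * x ^ (α - 1)))) x := h2.exp
    have h4 : HasDerivAt (fun x : ℝ => μ * (1 - Real.exp (-c * x ^ α)))
        (μ * (0 - Real.exp (-c * x ^ α) * (-c * (α * x ^ (α - 1))))) x :=
      ((hasDerivAt_const x (1:ℝ)).sub h3).const_mul μ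
    have h5 := (h4.div (hasDerivAt_id x) hx.ne').sub_const 1
    simp only [Pi.div_apply, id_eq] at h5
    refine h5.congr_deriv ?_
    ring
  -- the derivative is negative
  have hderiv_neg : ∀ x : ℝ, 0 < x →
      (μ * (Real.exp (-c * x ^ α) * (c * (α * x ^ (α - 1)))) * x
        - μ * (1 - Real.exp (-c * x ^ α)) * 1) / x ^ 2 < 0 := by
    intro x hx
    have hxα : 0 < x ^ α := Real.rpow_pos_of_pos hx α
    set t : ℝ := c * x ^ α with ht
    have htpos : 0 < t := mul_pos hc hxα
    have hte : Real.exp t * Real.exp (-t) = 1 := by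
      rw [← Real.exp_add]; simp
    have h1 : t * Real.exp (-t) ≤ 1 - Real.exp (-t) := by
      have h := Real.add_one_le_exp t
      have he := Real.exp_pos (-t)
      nlinarith
    have h2 : α * (t * Real.exp (-t)) < t * Real.exp (-t) := by
      have : 0 < t * Real.exp (-t) := mul_pos htpos (Real.exp_pos _)
      nlinarith
    have hxx : x ^ (α - 1) * x = x ^ α := by
      rw [← Real.rpow_add_one hx.ne', sub_add_cancel]
    apply div_neg_of_neg_of_pos _ (by positivity)
    have hrw : μ * (Real.exp (-c * x ^ α) * (c * (α * x ^ (α - 1)))) * x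
        - μ * (1 - Real.exp (-c * x ^ α)) * 1
        = μ * (α * (t * Real.exp (-t)) - (1 - Real.exp (-t))) := by
      rw [ht]
      have : Real.exp (-(c * x ^ α)) * (c * (α * x ^ (α - 1))) * x
          = α * (c * x ^ α * Real.exp (-(c * x ^ α))) := by
        rw [show Real.exp (-(c * x ^ α)) * (c * (α * x ^ (α - 1))) * x
            = α * (c * (x ^ (α - 1) * x) * Real.exp (-(c * x ^ α))) by ring, hxx]
      rw [show -c * x ^ α = -(c * x ^ α) by ring]
      rw [mul_comm μ (1 - Real.exp (-(c * x ^ α))), mul_one]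
      nlinarith [this]
    rw [hrw]
    have : α * (t * Real.exp (-t)) - (1 - Real.exp (-t)) < 0 := by linarith
    exact mul_neg_of_pos_of_neg hμ this
  have hFanti : StrictAntiOn F (Set.Ioi 0) := by
    apply strictAntiOn_of_deriv_neg (convex_Ioi 0)
    · exact fun x hx => (hderiv x hx).continuousAt.continuousWithinAt
    · intro x hx
      rw [interior_Ioi] at hx
      rw [(hderiv x hx).deriv]
      exact hderiv_neg x hx
  -- choose a small point where g > 0
  set e1 : ℝ := c⁻¹ ^ α⁻¹ with he1
  set e2 : ℝ := (μ * c / 4) ^ (1 - α)⁻¹ with he2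
  set a : ℝ := min (min e1 e2) (μ / 2) with ha
  have he1pos : 0 < e1 := Real.rpow_pos_of_pos (inv_pos.mpr hc) _
  have he2pos : 0 < e2 := Real.rpow_pos_of_pos (by positivity) _
  have hapos : 0 < a := lt_min (lt_min he1pos he2pos) (by positivity)
  have haμ : a < μ := lt_of_le_of_lt (min_le_right _ _) (by linarith)
  have h_ca : c * a ^ α ≤ 1 := by
    have h1 : a ^ α ≤ e1 ^ α :=
      Real.rpow_le_rpow hapos.le (le_trans (min_le_left _ _) (min_le_left _ _)) hα0.le
    have h2 : e1 ^ α = c⁻¹ := Real.rpow_inv_rpow (inv_pos.mpr hc).le hα0.ne'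
    rw [h2] at h1
    calc c * a ^ α ≤ c * c⁻¹ := by nlinarith
    _ = 1 := mul_inv_cancel₀ hc.ne'
  have h_a1α : a ^ (1 - α) ≤ μ * c / 4 := by
    have h1 : a ^ (1 - α) ≤ e2 ^ (1 - α) :=
      Real.rpow_le_rpow hapos.le (le_trans (min_le_left _ _) (min_le_right _ _)) (by linarith)
    have h2 : e2 ^ (1 - α) = μ * c / 4 :=
      Real.rpow_inv_rpow (by positivity) (by intro h; linarith [sub_eq_zero.mp h])
    rwa [h2] at h1
  have hga : 0 < g a := by
    rw [hg]
    set s : ℝ := c * a ^ α with hs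
    have hspos : 0 < s := mul_pos hc (Real.rpow_pos_of_pos hapos α)
    have hs1 : s ≤ 1 := h_ca
    -- 1 - exp(-s) ≥ s/(1+s) ≥ s/2
    have hkey : s / 2 ≤ 1 - Real.exp (-s) := by
      have h := Real.add_one_le_exp s
      have he := Real.exp_pos (-s)
      have hte : Real.exp s * Real.exp (-s) = 1 := by rw [← Real.exp_add]; simp
      nlinarith
    -- a = a^(1-α) * a^α
    have haa : a = a ^ (1 - α) * a ^ α := by
      rw [← Real.rpow_add hapos]; norm_num
    have hfin : a < μ * s / 2 := by
      rw [hs]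
      have hxα : 0 < a ^ α := Real.rpow_pos_of_pos hapos α
      calc a = a ^ (1 - α) * a ^ α := haa
      _ ≤ (μ * c / 4) * a ^ α := by nlinarith
      _ < (μ * c / 2) * a ^ α := by nlinarith
      _ = μ * (c * a ^ α) / 2 := by ring
    rw [show -c * a ^ α = -(c * a ^ α) by ring]
    nlinarith [mul_le_mul_of_nonneg_left hkey hμ.le]
  have hgμ : g μ < 0 := by
    rw [hg]
    have := Real.exp_pos (-c * μ ^ α)
    nlinarith
  -- intermediate value theorem
  have hcont : ContinuousOn g (Set.Icc a μ) := by
    have hsub : Set.Icc a μ ⊆ Set.Ioi 0 := fun x hx => lt_of_lt_of_le hapos hx.1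
    have hFc : ContinuousOn F (Set.Icc a μ) :=
      fun x hx => ((hderiv x (hsub hx)).continuousAt).continuousWithinAt
    exact ((continuous_id.continuousOn).mul hFc).congr fun x hx => hgF x (hsub hx)
  have h0 : (0:ℝ) ∈ Set.Ioo (g μ) (g a) := ⟨hgμ, hga⟩
  obtain ⟨ρ, hρmem, hρ0⟩ := intermediate_value_Ioo' haμ.le hcont h0
  have hρpos : 0 < ρ := lt_trans hapos hρmem.1
  have hρμ : ρ < μ := hρmem.2
  have hFρ : F ρ = 0 := by
    have := hgF ρ hρpos
    rw [hρ0] at this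
    exact (mul_eq_zero.mp this.symm).resolve_left hρpos.ne'
  refine ⟨ρ, hρpos, hρ0, hρμ, ?_, ?_, ?_⟩
  · intro x hx hxρ
    have : F ρ < F x := hFanti (Set.mem_Ioi.mpr hx) (Set.mem_Ioi.mpr hρpos) hxρ
    rw [hFρ] at this
    rw [hgF x hx]
    exact mul_pos hx this
  · intro x hxρ
    have hx : 0 < x := lt_trans hρpos hxρ
    have : F x < F ρ := hFanti (Set.mem_Ioi.mpr hρpos) (Set.mem_Ioi.mpr hx) hxρ
    rw [hFρ] at this
    rw [hgF x hx]
    exact mul_neg_of_pos_of_neg hx this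
  · intro x hx hgx
    have hFx : F x = 0 := by
      have := hgF x hx
      rw [hgx] at this
      exact (mul_eq_zero.mp this.symm).resolve_left hx.ne'
    exact hFanti.injOn (Set.mem_Ioi.mpr hx) (Set.mem_Ioi.mpr hρpos) (by rw [hFx, hFρ])
end

section
/- Fix α ∈ (0,1), γ ∈ (0,1) with α + γ < 1, c > 0, and an integer n_0 ≥ 1. Let (a_n)_{n≥n_0} be the real sequence defined by a_{n_0} = a_0 > 0 and a_{n+1} = a_n + c·a_n^α·n^{γ−1} for n ≥ n_0. Then a_n / n^{γ/(1−α)} → (c·(1−α)/γ)^{1/(1−α)} as n → ∞. -/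
open Filter

/-- Lower Bernoulli: for `0 ≤ p ≤ 1` and `x ≥ 0`, `1 + p x - x² ≤ (1+x)^p`. -/
lemma aux_bernoulli_lower {x p : ℝ} (hx : 0 ≤ x) (hp0 : 0 ≤ p) (hp1 : p ≤ 1) :
    1 + p * x - x ^ 2 ≤ (1 + x) ^ p := by
  have h1x : (0:ℝ) < 1 + x := by linarith
  have hb : (1 + x) ^ (1 - p) ≤ 1 + (1 - p) * x :=
    rpow_one_add_le_one_add_mul_self (by linarith) (by linarith) (by linarith)
  have hpos : (0:ℝ) < 1 + (1 - p) * x := by nlinarith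
  have hmul : 1 + x ≤ (1 + x) ^ p * (1 + (1 - p) * x) := by
    calc 1 + x = (1 + x) ^ p * (1 + x) ^ (1 - p) := by
          rw [← Real.rpow_add h1x, show p + (1 - p) = 1 by ring, Real.rpow_one]
      _ ≤ (1 + x) ^ p * (1 + (1 - p) * x) :=
          mul_le_mul_of_nonneg_left hb (Real.rpow_nonneg h1x.le p)
  have key : (1 + p * x - x ^ 2) * (1 + (1 - p) * x) ≤ 1 + x := by
    nlinarith [sq_nonneg x, mul_nonneg (mul_nonneg hx hx) hx, sq_nonneg (p - 1/2),
      mul_nonneg (sq_nonneg x) (mul_nonneg hp0 (sub_nonneg.2 hp1)),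
      mul_nonneg (mul_nonneg (mul_nonneg hx hx) hx) (sub_nonneg.2 hp1)]
  exact le_of_mul_le_mul_right (key.trans hmul) hpos

/-- `γ k^{γ-1} ≤ k^γ - (k-1)^γ` for real `K ≥ 1`, `0 < γ < 1`. -/
lemma aux_sum_L {γ K : ℝ} (hγ0 : 0 < γ) (hγ1 : γ < 1) (hK : 1 ≤ K) :
    γ * K ^ (γ - 1) ≤ K ^ γ - (K - 1) ^ γ := by
  have hK0 : (0:ℝ) < K := lt_of_lt_of_le one_pos hK
  have h1 : (0:ℝ) ≤ 1 + -(1/K) := by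
    have : 1/K ≤ 1 := by rw [div_le_one hK0]; exact hK
    linarith
  have hsplit : (K - 1) ^ γ = K ^ γ * (1 + -(1/K)) ^ γ := by
    rw [← Real.mul_rpow hK0.le h1]
    congr 1
    field_simp
    ring
  have hbern : (1 + -(1/K)) ^ γ ≤ 1 + γ * -(1/K) := by
    apply rpow_one_add_le_one_add_mul_self _ hγ0.le hγ1.le
    have : 0 < 1/K := by positivity
    linarith
  have hpow : K ^ (γ - 1) = K ^ γ / K := by
    rw [Real.rpow_sub hK0, Real.rpow_one]
  have hKγ : (0:ℝ) ≤ K ^ γ := Real.rpow_nonneg hK0.le γ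
  have h2 : (K - 1) ^ γ ≤ K ^ γ * (1 + γ * -(1/K)) := by
    rw [hsplit]
    exact mul_le_mul_of_nonneg_left hbern hKγ
  have h3 : K ^ γ * (1 + γ * -(1/K)) = K ^ γ - γ * (K ^ γ / K) := by
    field_simp; ring
  rw [hpow]; linarith [h2, h3.symm.le]

/-- `(K+1)^γ - K^γ ≤ γ K^{γ-1}` for real `K ≥ 1`, `0 < γ < 1`. -/
lemma aux_sum_U {γ K : ℝ} (hγ0 : 0 < γ) (hγ1 : γ < 1) (hK : 1 ≤ K) :
    (K + 1) ^ γ - K ^ γ ≤ γ * K ^ (γ - 1) := by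
  have hK0 : (0:ℝ) < K := lt_of_lt_of_le one_pos hK
  have h1 : (0:ℝ) ≤ 1 + 1/K := by positivity
  have hsplit : (K + 1) ^ γ = K ^ γ * (1 + 1/K) ^ γ := by
    rw [← Real.mul_rpow hK0.le h1]
    congr 1
    field_simp
  have hbern : (1 + 1/K) ^ γ ≤ 1 + γ * (1/K) := by
    apply rpow_one_add_le_one_add_mul_self _ hγ0.le hγ1.le
    have : 0 < 1/K := by positivity
    linarith
  have hpow : K ^ (γ - 1) = K ^ γ / K := by
    rw [Real.rpow_sub hK0, Real.rpow_one]
  have hKγ : (0:ℝ) ≤ K ^ γ := Real.rpow_nonneg hK0.le γ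
  have h2 : (K + 1) ^ γ ≤ K ^ γ * (1 + γ * (1/K)) := by
    rw [hsplit]
    exact mul_le_mul_of_nonneg_left hbern hKγ
  have h3 : K ^ γ * (1 + γ * (1/K)) = K ^ γ + γ * (K ^ γ / K) := by
    field_simp
  rw [hpow]; linarith [h2, h3.symm.le]

set_option maxHeartbeats 2000000 in
/-- The deterministic recursion `a_{n+1} = a_n + c a_n^α n^{γ-1}` (with `α, γ ∈ (0,1)`,
`α + γ < 1`, `c > 0`, started at `a_{n₀} = a₀ > 0`) satisfies
`a_n / n^{γ/(1-α)} → (c(1-α)/γ)^{1/(1-α)}`. -/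
theorem deterministic_recursion_asymptotics
    (α γ c : ℝ) (hα : α ∈ Set.Ioo (0:ℝ) 1) (hγ : γ ∈ Set.Ioo (0:ℝ) 1)
    (hαγ : α + γ < 1) (hc : 0 < c)
    (n₀ : ℕ) (hn₀ : 1 ≤ n₀) (a₀ : ℝ) (ha₀ : 0 < a₀)
    (a : ℕ → ℝ) (hinit : a n₀ = a₀)
    (hrec : ∀ n ≥ n₀, a (n + 1) = a n + c * (a n) ^ α * (n : ℝ) ^ (γ - 1)) :
    Tendsto (fun n => a n / (n : ℝ) ^ (γ / (1 - α))) atTop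
      (nhds ((c * (1 - α) / γ) ^ (1 / (1 - α)))) := by
  obtain ⟨hα0, hα1⟩ := hα
  obtain ⟨hγ0, hγ1⟩ := hγ
  set β : ℝ := 1 - α with hβdef
  clear_value β
  have hβ0 : 0 < β := by rw [hβdef]; linarith
  have hβ1 : β ≤ 1 := by rw [hβdef]; linarith
  -- positivity and lower bound
  have hpos : ∀ n, n₀ ≤ n → a₀ ≤ a n := by
    intro n hn
    induction n, hn using Nat.le_induction with
    | base => rw [hinit]
    | succ n hn ih =>
      rw [hrec n hn]
      have h1 : 0 < a n := lt_of_lt_of_le ha₀ ih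
      have h2 : 0 ≤ c * a n ^ α * (n:ℝ) ^ (γ - 1) := by positivity
      linarith
  have hA : ∀ n, n₀ ≤ n → 0 < a n := fun n hn => lt_of_lt_of_le ha₀ (hpos n hn)
  have hn1 : ∀ n : ℕ, n₀ ≤ n → (1:ℝ) ≤ (n:ℝ) := by
    intro n hn; exact_mod_cast le_trans hn₀ hn
  set b : ℕ → ℝ := fun n => a n ^ β with hbdef
  have hb : ∀ m, b m = a m ^ β := fun m => by rw [hbdef]
  clear_value b
  -- key one-step bounds
  have key : ∀ n, n₀ ≤ n →
      b (n+1) ≤ b n + c * β * (n:ℝ) ^ (γ-1) ∧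
      b n + c * β * (n:ℝ) ^ (γ-1) - c^2 * a₀ ^ (α-1) * ((n:ℝ) ^ (γ-1))^2 ≤ b (n+1) := by
    intro n hn
    have hAn := hA n hn
    have hNn : (0:ℝ) < (n:ℝ) := lt_of_lt_of_le one_pos (hn1 n hn)
    set x : ℝ := c * a n ^ (α-1) * (n:ℝ) ^ (γ-1) with hxdef
    clear_value x
    have hx0 : 0 ≤ x := by rw [hxdef]; positivity
    have h1 : a n ^ α = a n * a n ^ (α - 1) := by
      rw [show α = 1 + (α - 1) by ring, Real.rpow_add hAn, Real.rpow_one]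
      ring_nf
    have hax : a (n+1) = a n * (1 + x) := by
      rw [hrec n hn, hxdef, h1]; ring
    have hbsplit : b (n+1) = a n ^ β * (1 + x) ^ β := by
      rw [hb, hax, Real.mul_rpow hAn.le (by linarith)]
    have hbx : a n ^ β * x = c * (n:ℝ) ^ (γ-1) := by
      rw [hxdef]
      have : a n ^ β * a n ^ (α - 1) = 1 := by
        rw [← Real.rpow_add hAn, show β + (α - 1) = 0 by rw [hβdef]; ring, Real.rpow_zero]
      calc a n ^ β * (c * a n ^ (α-1) * (n:ℝ) ^ (γ-1))
          = c * (a n ^ β * a n ^ (α-1)) * (n:ℝ) ^ (γ-1) := by ring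
        _ = c * (n:ℝ) ^ (γ-1) := by rw [this]; ring
    have hKγ : (0:ℝ) ≤ a n ^ β := Real.rpow_nonneg hAn.le β
    constructor
    · have hup : (1 + x) ^ β ≤ 1 + β * x :=
        rpow_one_add_le_one_add_mul_self (by linarith) hβ0.le hβ1
      have : b (n+1) ≤ a n ^ β * (1 + β * x) := by
        rw [hbsplit]; exact mul_le_mul_of_nonneg_left hup hKγ
      calc b (n+1) ≤ a n ^ β * (1 + β * x) := this
        _ = a n ^ β + β * (a n ^ β * x) := by ring
        _ = b n + c * β * (n:ℝ) ^ (γ-1) := by rw [hbx, hb]; ring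
    · have hlo : 1 + β * x - x ^ 2 ≤ (1 + x) ^ β :=
        aux_bernoulli_lower hx0 hβ0.le hβ1
      have h2 : a n ^ β * (1 + β * x - x ^ 2) ≤ b (n+1) := by
        rw [hbsplit]; exact mul_le_mul_of_nonneg_left hlo hKγ
      have herr : a n ^ β * x ^ 2 ≤ c^2 * a₀ ^ (α-1) * ((n:ℝ) ^ (γ-1))^2 := by
        have e1 : a n ^ β * x ^ 2 = c^2 * a n ^ (α-1) * ((n:ℝ) ^ (γ-1))^2 := by
          have : a n ^ β * x ^ 2 = (a n ^ β * x) * x := by ring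
          rw [this, hbx, hxdef]; ring
        rw [e1]
        have hbase : a n ^ (α-1) ≤ a₀ ^ (α-1) :=
          Real.rpow_le_rpow_of_nonpos ha₀ (hpos n hn) (by linarith)
        have : (0:ℝ) ≤ c^2 * ((n:ℝ) ^ (γ-1))^2 := by positivity
        nlinarith [this, hbase]
      have := mul_le_mul_of_nonneg_left (le_refl (1:ℝ)) hKγ
      calc b n + c * β * (n:ℝ) ^ (γ-1) - c^2 * a₀ ^ (α-1) * ((n:ℝ) ^ (γ-1))^2
          ≤ b n + c * β * (n:ℝ) ^ (γ-1) - a n ^ β * x ^ 2 := by linarith [herr]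
        _ = a n ^ β * (1 + β * x - x ^ 2) := by
            have e : c * β * (n:ℝ) ^ (γ-1) = β * (a n ^ β * x) := by rw [hbx]; ring
            rw [hb, e]; ring
        _ ≤ b (n+1) := h2
  -- sum bounds (multiplied through by γ to stay linear)
  have sumU : ∀ N : ℕ, 1 ≤ N → ∀ n, N ≤ n →
      γ * ∑ k ∈ Finset.Ico N n, ((k:ℝ)) ^ (γ-1) ≤ ((n:ℝ) - 1) ^ γ - ((N:ℝ) - 1) ^ γ := by
    intro N hN n hn
    induction n, hn using Nat.le_induction with
    | base => simp
    | succ n hn ih =>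
      rw [Finset.sum_Ico_succ_top hn]
      have hk : (1:ℝ) ≤ (n:ℝ) := by exact_mod_cast le_trans hN hn
      have hL := aux_sum_L hγ0 hγ1 hk
      have e : ((n+1:ℕ):ℝ) - 1 = (n:ℝ) := by push_cast; ring
      rw [e]
      linarith [ih, hL]
  have sumL : ∀ N : ℕ, 1 ≤ N → ∀ n, N ≤ n →
      (n:ℝ) ^ γ - (N:ℝ) ^ γ ≤ γ * ∑ k ∈ Finset.Ico N n, ((k:ℝ)) ^ (γ-1) := by
    intro N hN n hn
    induction n, hn using Nat.le_induction with
    | base => simp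
    | succ n hn ih =>
      rw [Finset.sum_Ico_succ_top hn]
      have hk : (1:ℝ) ≤ (n:ℝ) := by exact_mod_cast le_trans hN hn
      have hU := aux_sum_U hγ0 hγ1 hk
      have e : ((n+1:ℕ):ℝ) = (n:ℝ) + 1 := by push_cast; ring
      rw [e]
      linarith [ih, hU]
  -- accumulated upper bound
  have Hup : ∀ n, n₀ ≤ n → b n ≤ b n₀ + c * β * ∑ k ∈ Finset.Ico n₀ n, ((k:ℝ)) ^ (γ-1) := by
    intro n hn
    induction n, hn using Nat.le_induction with
    | base => simp
    | succ n hn ih =>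
      rw [Finset.sum_Ico_succ_top hn]
      have hk := (key n hn).1
      linarith [ih, hk]
  -- basic tendsto facts
  have hnγ : Tendsto (fun n : ℕ => (n:ℝ) ^ γ) atTop atTop :=
    (tendsto_rpow_atTop hγ0).comp tendsto_natCast_atTop_atTop
  have hdiv : ∀ C : ℝ, Tendsto (fun n : ℕ => C / (n:ℝ) ^ γ) atTop (nhds 0) :=
    fun C => Tendsto.div_atTop tendsto_const_nhds hnγ
  have hpow0 : Tendsto (fun n : ℕ => (n:ℝ) ^ (γ - 1)) atTop (nhds 0) := by
    have h := (tendsto_rpow_neg_atTop (show (0:ℝ) < 1 - γ by linarith)).comp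
      tendsto_natCast_atTop_atTop
    simpa [Function.comp_def, neg_sub] using h
  -- limit of b n / n^γ
  have htb : Tendsto (fun n => b n / (n:ℝ) ^ γ) atTop (nhds (c * β / γ)) := by
    rw [Metric.tendsto_atTop]
    intro ε hε
    -- upper bound, eventually
    have hupev : ∀ᶠ n : ℕ in atTop, b n / (n:ℝ) ^ γ ≤ c * β / γ + ε / 2 := by
      have h1 : ∀ᶠ n : ℕ in atTop, b n₀ / (n:ℝ) ^ γ < ε / 2 :=
        (hdiv (b n₀)).eventually_lt_const (by linarith)
      filter_upwards [h1, eventually_ge_atTop n₀] with n h1n hn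
      have hNpos : (0:ℝ) < (n:ℝ) ^ γ := by
        have := hn1 n hn
        positivity
      have hS := sumU n₀ hn₀ n hn
      have hn1' : (1:ℝ) ≤ (n:ℝ) := hn1 n hn
      have hmono : ((n:ℝ) - 1) ^ γ ≤ (n:ℝ) ^ γ :=
        Real.rpow_le_rpow (by linarith) (by linarith) hγ0.le
      have hnn : (0:ℝ) ≤ ((n₀:ℝ) - 1) ^ γ := by
        apply Real.rpow_nonneg
        have : (1:ℝ) ≤ (n₀:ℝ) := by exact_mod_cast hn₀
        linarith
      have hSle : γ * ∑ k ∈ Finset.Ico n₀ n, ((k:ℝ)) ^ (γ-1) ≤ (n:ℝ) ^ γ := by linarith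
      have hb' : b n ≤ b n₀ + c * β / γ * (n:ℝ) ^ γ := by
        have h2 := Hup n hn
        have h3 : c * β * ∑ k ∈ Finset.Ico n₀ n, ((k:ℝ)) ^ (γ-1) ≤ c * β / γ * (n:ℝ) ^ γ := by
          have h4 := mul_le_mul_of_nonneg_left hSle
            (show (0:ℝ) ≤ c * β / γ by positivity)
          calc c * β * ∑ k ∈ Finset.Ico n₀ n, ((k:ℝ)) ^ (γ-1)
              = c * β / γ * (γ * ∑ k ∈ Finset.Ico n₀ n, ((k:ℝ)) ^ (γ-1)) := by
                field_simp
            _ ≤ c * β / γ * (n:ℝ) ^ γ := h4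
        linarith
      calc b n / (n:ℝ) ^ γ ≤ (b n₀ + c * β / γ * (n:ℝ) ^ γ) / (n:ℝ) ^ γ := by
            gcongr
        _ = b n₀ / (n:ℝ) ^ γ + c * β / γ := by
            rw [add_div, mul_div_assoc, div_self hNpos.ne', mul_one]
        _ ≤ c * β / γ + ε / 2 := by linarith
    -- lower bound, eventually
    have hloev : ∀ᶠ n : ℕ in atTop, c * β / γ - ε / 2 ≤ b n / (n:ℝ) ^ γ := by
      set ε₁ : ℝ := min (γ * ε / 4) (c * β / 2) with hε₁def
      clear_value ε₁
      have hε₁0 : 0 < ε₁ := by rw [hε₁def]; exact lt_min (by positivity) (by positivity)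
      have hε₁a : ε₁ ≤ γ * ε / 4 := by rw [hε₁def]; exact min_le_left _ _
      have hε₁b : ε₁ ≤ c * β / 2 := by rw [hε₁def]; exact min_le_right _ _
      have hq0 : 0 ≤ c * β - ε₁ := by nlinarith
      -- choose N₁ making error term small
      have herrsmall : ∀ᶠ n : ℕ in atTop, c ^ 2 * a₀ ^ (α - 1) * (n:ℝ) ^ (γ-1) < ε₁ := by
        exact (hpow0.const_mul (c ^ 2 * a₀ ^ (α - 1))).eventually_lt_const
          (by simpa using hε₁0 : (c ^ 2 * a₀ ^ (α - 1)) * 0 < ε₁)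
      obtain ⟨N₁, hN₁⟩ := herrsmall.exists_forall_of_atTop
      set N : ℕ := max N₁ n₀ with hNdef
      have hNn₀ : n₀ ≤ N := le_max_right _ _
      have hNN₁ : N₁ ≤ N := le_max_left _ _
      clear_value N
      have hN1 : 1 ≤ N := le_trans hn₀ hNn₀
      -- accumulated lower bound from N
      have Hlo : ∀ n, N ≤ n →
          b N + (c * β - ε₁) * ∑ k ∈ Finset.Ico N n, ((k:ℝ)) ^ (γ-1) ≤ b n := by
        intro n hn
        induction n, hn using Nat.le_induction with
        | base => simp
        | succ n hn ih =>
          rw [Finset.sum_Ico_succ_top hn]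
          have hkey := (key n (le_trans hNn₀ hn)).2
          have ht0 : (0:ℝ) ≤ (n:ℝ) ^ (γ-1) := Real.rpow_nonneg (Nat.cast_nonneg n) _
          have hsm := hN₁ n (le_trans hNN₁ hn)
          have herr2 : c ^ 2 * a₀ ^ (α - 1) * ((n:ℝ) ^ (γ-1)) ^ 2 ≤ ε₁ * (n:ℝ) ^ (γ-1) := by
            nlinarith [hsm, ht0]
          linarith [ih, hkey, herr2]
      -- conclude
      set q : ℝ := (c * β - ε₁) / γ with hqdef
      clear_value q
      have hq0' : 0 ≤ q := by rw [hqdef]; positivity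
      set D : ℝ := b N - q * (N:ℝ) ^ γ with hDdef
      clear_value D
      have h1 : ∀ᶠ n : ℕ in atTop, -(ε / 4) < D / (n:ℝ) ^ γ :=
        (hdiv D).eventually_const_lt (by linarith)
      filter_upwards [h1, eventually_ge_atTop N] with n h1n hn
      have hn1' : (1:ℝ) ≤ (n:ℝ) := hn1 n (le_trans hNn₀ hn)
      have hNpos : (0:ℝ) < (n:ℝ) ^ γ := by positivity
      have hS := sumL N hN1 n hn
      have hlo1 := Hlo n hn
      have h3 : q * ((n:ℝ) ^ γ - (N:ℝ) ^ γ) ≤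
          (c * β - ε₁) * ∑ k ∈ Finset.Ico N n, ((k:ℝ)) ^ (γ-1) := by
        have h4 := mul_le_mul_of_nonneg_left hS hq0'
        calc q * ((n:ℝ) ^ γ - (N:ℝ) ^ γ)
            ≤ q * (γ * ∑ k ∈ Finset.Ico N n, ((k:ℝ)) ^ (γ-1)) := h4
          _ = (c * β - ε₁) * ∑ k ∈ Finset.Ico N n, ((k:ℝ)) ^ (γ-1) := by
              rw [hqdef]
              field_simp
      have hb' : q * (n:ℝ) ^ γ + D ≤ b n := by
        rw [hDdef]; linarith
      have h5 : q + D / (n:ℝ) ^ γ ≤ b n / (n:ℝ) ^ γ := by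
        calc q + D / (n:ℝ) ^ γ = (q * (n:ℝ) ^ γ + D) / (n:ℝ) ^ γ := by
              rw [add_div, mul_div_assoc, div_self hNpos.ne', mul_one]
          _ ≤ b n / (n:ℝ) ^ γ := by gcongr
      have h6 : c * β / γ - ε / 4 ≤ q := by
        rw [hqdef, sub_div]
        have he : ε₁ / γ ≤ ε / 4 := by
          rw [div_le_iff₀ hγ0]
          nlinarith [hε₁a]
        linarith
      linarith [h5, h6, h1n]
    -- combine
    obtain ⟨N₂, hN₂⟩ := hupev.exists_forall_of_atTop
    obtain ⟨N₃, hN₃⟩ := hloev.exists_forall_of_atTop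
    refine ⟨max N₂ N₃, fun n hn => ?_⟩
    have h1 := hN₂ n (le_trans (le_max_left _ _) hn)
    have h2 := hN₃ n (le_trans (le_max_right _ _) hn)
    rw [Real.dist_eq, abs_lt]
    constructor <;> linarith
  -- final composition
  have hcomp := htb.rpow_const (p := 1/β) (Or.inr (by positivity))
  apply hcomp.congr'
  filter_upwards [eventually_ge_atTop n₀] with n hn
  have hAn := hA n hn
  have hn1' : (1:ℝ) ≤ (n:ℝ) := hn1 n hn
  rw [hb n, Real.div_rpow (Real.rpow_nonneg hAn.le β) (Real.rpow_nonneg (by linarith) γ),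
    ← Real.rpow_mul hAn.le, mul_one_div, div_self hβ0.ne', Real.rpow_one,
    ← Real.rpow_mul (by linarith : (0:ℝ) ≤ (n:ℝ)), mul_one_div]
end
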